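/- For every real n > 0, the universal kurtosis R_n^{(4)}(s) = Σ_{n,4}(s) / (Σ_{n,2}(s))² satisfies lim_{s→+∞} R_n^{(4)}(s) = (n+2)/n and lim_{s→−∞} R_n^{(4)}(s) = 1. -/

import Mathlib

open MeasureTheory

/-- `I k s = ∫₀^∞ x^k e^{-x⁴/4 - s x²/2} dx`. -/
noncomputable def I (k s : ℝ) : ℝ :=
  ∫ x in Set.Ioi (0 : ℝ), x ^ k * Real.exp (-x ^ 4 / 4 - s * x ^ 2 / 2)

/-- The moment `Σ_{n,k}(s) = I_{k+n-1}(s) / I_{n-1}(s)`. -/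
noncomputable def Sig (n k s : ℝ) : ℝ := I (k + n - 1) s / I (n - 1) s

section aux
open Set Filter Real Topology

-- basic integrability
lemma integ_aux (k s : ℝ) (hk : -1 < k) :
    IntegrableOn (fun x : ℝ => x ^ k * Real.exp (-x ^ 4 / 4 - s * x ^ 2 / 2)) (Set.Ioi 0) := by
  have hmain : IntegrableOn (fun x : ℝ => Real.exp ((|s|+1)^2/4) * (x ^ k * Real.exp (-(1/2) * x ^ 2))) (Set.Ioi 0) :=
    (integrableOn_rpow_mul_exp_neg_mul_sq (by norm_num) hk).const_mul _
  refine hmain.mono' ?_ ?_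
  · apply Measurable.aestronglyMeasurable
    fun_prop
  · filter_upwards [ae_restrict_mem measurableSet_Ioi] with x hx
    have hx0 : (0:ℝ) < x := hx
    rw [Real.norm_eq_abs, abs_mul, abs_of_nonneg (Real.rpow_nonneg hx0.le k),
      abs_of_nonneg (Real.exp_pos _).le, ← mul_assoc, mul_comm (Real.exp _) (x ^ k), mul_assoc]
    refine mul_le_mul_of_nonneg_left ?_ (Real.rpow_nonneg hx0.le k)
    rw [← Real.exp_add]
    apply Real.exp_le_exp.mpr
    have h1 : |s| ≥ s := le_abs_self s
    have h2 : |s| ≥ -s := neg_le_abs s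
    nlinarith [sq_nonneg (x^2 - (|s|+1)), sq_nonneg x, sq_nonneg (|s|+1)]

lemma I_pos (k s : ℝ) (hk : -1 < k) : 0 < I k s := by
  rw [I, setIntegral_pos_iff_support_of_nonneg_ae]
  · have hsub : (Set.Ioi (0:ℝ)) ⊆ Function.support fun x => x ^ k * Real.exp (-x ^ 4 / 4 - s * x ^ 2 / 2) := by
      intro x hx
      exact ne_of_gt (mul_pos (Real.rpow_pos_of_pos hx k) (Real.exp_pos _))
    refine lt_of_lt_of_le ?_ (measure_mono (Set.subset_inter hsub Set.Subset.rfl))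
    simp [Real.volume_Ioi]
  · filter_upwards [ae_restrict_mem measurableSet_Ioi] with x hx
    exact le_of_lt (mul_pos (Real.rpow_pos_of_pos hx k) (Real.exp_pos _))
  · exact integ_aux k s hk

lemma K_eq (k s : ℝ) (hs : 0 < s) :
    (∫ x in Set.Ioi (0:ℝ), x ^ k * Real.exp (-x ^ 4 / (4*s^2) - x ^ 2 / 2))
      = Real.sqrt s ^ k * (Real.sqrt s * I k s) := by
  set c := Real.sqrt s with hcdef
  have hc : 0 < c := Real.sqrt_pos.mpr hs
  have hcs : c ^ 2 = s := Real.sq_sqrt hs.le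
  have key := integral_comp_mul_left_Ioi
    (fun x => x ^ k * Real.exp (-x ^ 4 / 4 - s * x ^ 2 / 2)) 0 (inv_pos.mpr hc)
  simp only [mul_zero, inv_inv, smul_eq_mul] at key
  have h1 : ∀ x ∈ Set.Ioi (0:ℝ),
      (c⁻¹ * x) ^ k * Real.exp (-(c⁻¹ * x) ^ 4 / 4 - s * (c⁻¹ * x) ^ 2 / 2)
        = (c ^ k)⁻¹ * (x ^ k * Real.exp (-x ^ 4 / (4*s^2) - x ^ 2 / 2)) := by
    intro x hx
    have hx0 : (0:ℝ) ≤ x := le_of_lt hx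
    have h4 : (c⁻¹ * x) ^ (4:ℕ) = x ^ 4 / s ^ 2 := by
      rw [mul_pow, inv_pow, show c ^ (4:ℕ) = s ^ 2 by nlinarith [hcs]]; ring
    have h2 : s * (c⁻¹ * x) ^ (2:ℕ) = x ^ 2 := by
      rw [mul_pow, inv_pow, hcs]; field_simp
    rw [Real.mul_rpow (by positivity) hx0, h4, h2, ← Real.inv_rpow hc.le, Real.inv_rpow hc.le]
    ring_nf
  rw [setIntegral_congr_fun measurableSet_Ioi h1, integral_const_mul] at key
  have hck : (0:ℝ) < c ^ k := Real.rpow_pos_of_pos hc k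
  rw [inv_mul_eq_iff_eq_mul₀ (ne_of_gt hck)] at key
  rw [I]
  exact key

lemma K_tendsto (k : ℝ) (hk : -1 < k) :
    Tendsto (fun s : ℝ => ∫ x in Set.Ioi (0:ℝ), x ^ k * Real.exp (-x ^ 4 / (4*s^2) - x ^ 2 / 2))
      atTop (𝓝 (∫ x in Set.Ioi (0:ℝ), x ^ k * Real.exp (-(1/2) * x ^ 2))) := by
  apply tendsto_integral_filter_of_dominated_convergence
    (fun x => x ^ k * Real.exp (-(1/2) * x ^ 2))
  · filter_upwards with s
    apply Measurable.aestronglyMeasurable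
    fun_prop
  · filter_upwards with s
    filter_upwards [ae_restrict_mem measurableSet_Ioi] with x hx
    have hx0 : (0:ℝ) < x := hx
    rw [Real.norm_eq_abs, abs_mul, abs_of_nonneg (Real.rpow_nonneg hx0.le k),
      abs_of_nonneg (Real.exp_pos _).le]
    refine mul_le_mul_of_nonneg_left (Real.exp_le_exp.mpr ?_) (Real.rpow_nonneg hx0.le k)
    have h5 : 0 ≤ x ^ 4 / (4*s^2) := by positivity
    have h0 : -x^4/(4*s^2) = -(x^4/(4*s^2)) := by ring
    rw [h0]; linarith
  · exact integrableOn_rpow_mul_exp_neg_mul_sq (by norm_num) hk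
  · filter_upwards [ae_restrict_mem measurableSet_Ioi] with x hx
    have hx0 : (0:ℝ) < x := hx
    have h1 : Tendsto (fun s : ℝ => -x ^ 4 / (4*s^2) - x ^ 2 / 2) atTop (𝓝 (-(1/2) * x ^ 2)) := by
      have h2 : Tendsto (fun s : ℝ => -x ^ 4 / (4*s^2)) atTop (𝓝 0) := by
        have h3 : Tendsto (fun s : ℝ => 4*s^2) atTop atTop := by
          exact (tendsto_pow_atTop (by norm_num)).const_mul_atTop (by norm_num)
        have h4 := h3.inv_tendsto_atTop.const_mul (-x^4)
        rw [mul_zero] at h4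
        exact h4.congr fun s => by simp only [Pi.inv_apply]; ring
      have := h2.sub_const (x ^ 2 / 2)
      simpa [show (0:ℝ) - x^2/2 = -(1/2) * x^2 by ring] using this
    exact (tendsto_const_nhds.mul (Real.continuous_exp.continuousAt.tendsto.comp h1))

noncomputable def G (k : ℝ) : ℝ := ∫ x in Set.Ioi (0:ℝ), x ^ k * Real.exp (-(1/2) * x ^ 2)

lemma G_val (k : ℝ) (hk : -1 < k) :
    G k = (1/2:ℝ) ^ (-(k+1)/2) * (1/2) * Real.Gamma ((k+1)/2) := by
  rw [G, show (∫ x in Set.Ioi (0:ℝ), x ^ k * Real.exp (-(1/2) * x ^ 2))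
      = ∫ x in Set.Ioi (0:ℝ), x ^ k * Real.exp (-(1/2) * x ^ (2:ℝ)) from
    setIntegral_congr_fun measurableSet_Ioi (fun x hx => by
      rw [show (2:ℝ) = ((2:ℕ):ℝ) by norm_num, Real.rpow_natCast])]
  exact integral_rpow_mul_exp_neg_mul_rpow two_pos hk one_half_pos

lemma G_pos (k : ℝ) (hk : -1 < k) : 0 < G k := by
  rw [G_val k hk]
  have := Real.Gamma_pos_of_pos (show 0 < (k+1)/2 by linarith)
  positivity

lemma G_ratio (n : ℝ) (hn : 0 < n) : G (n+3) * G (n-1) / (G (n+1))^2 = (n+2)/n := by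
  rw [G_val (n+3) (by linarith), G_val (n-1) (by linarith), G_val (n+1) (by linarith)]
  set p4 := (1/2:ℝ) ^ (-(n+3+1)/2) with hp4
  set p0 := (1/2:ℝ) ^ (-(n-1+1)/2) with hp0
  set p2 := (1/2:ℝ) ^ (-(n+1+1)/2) with hp2
  set g0 := Real.Gamma ((n-1+1)/2) with hg0
  have h4 : Real.Gamma ((n+3+1)/2) = ((n+2)/2) * Real.Gamma ((n+1+1)/2) := by
    have h := Real.Gamma_add_one (s := (n+2)/2) (by positivity)
    rw [show (n+2)/2 + 1 = (n+3+1)/2 by ring] at h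
    rw [h, show (n+1+1)/2 = (n+2)/2 by ring]
  have h2 : Real.Gamma ((n+1+1)/2) = (n/2) * g0 := by
    have h := Real.Gamma_add_one (s := n/2) (by positivity)
    rw [show n/2 + 1 = (n+1+1)/2 by ring] at h
    rw [h, hg0, show (n-1+1)/2 = n/2 by ring]
  have hp : p4 * p0 = p2^2 := by
    rw [hp4, hp0, hp2, sq, ← Real.rpow_add one_half_pos, ← Real.rpow_add one_half_pos]
    ring_nf
  have hg0pos : 0 < g0 := Real.Gamma_pos_of_pos (by rw [show (n-1+1)/2 = n/2 by ring]; positivity)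
  have hp2pos : (0:ℝ) < p2 := Real.rpow_pos_of_pos one_half_pos _
  rw [h4, h2]
  rw [div_eq_div_iff (by positivity) (ne_of_gt hn)]
  linear_combination ((n+2)*n^2*g0^2/16) * hp

lemma K_tendsto' (k : ℝ) (hk : -1 < k) :
    Filter.Tendsto (fun s : ℝ => ∫ x in Set.Ioi (0:ℝ), x ^ k * Real.exp (-x ^ 4 / (4*s^2) - x ^ 2 / 2))
      Filter.atTop (𝓝 (G k)) := K_tendsto k hk

lemma atTop_limit (n : ℝ) (hn : 0 < n) :
    Tendsto (fun s : ℝ => Sig n 4 s / (Sig n 2 s)^2) atTop (𝓝 ((n+2)/n)) := by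
  have T4 := K_tendsto' (n+3) (by linarith)
  have T0 := K_tendsto' (n-1) (by linarith)
  have T2 := K_tendsto' (n+1) (by linarith)
  have hG2 : (G (n+1))^2 ≠ 0 := by
    have := G_pos (n+1) (by linarith); positivity
  have Tall := ((T4.mul T0).div (T2.pow 2) (by simpa using hG2))
  rw [G_ratio n hn] at Tall
  apply Tall.congr'
  filter_upwards [eventually_gt_atTop (0:ℝ)] with s hs
  simp only [Pi.div_apply]
  rw [K_eq _ _ hs, K_eq _ _ hs, K_eq _ _ hs]
  set c := Real.sqrt s with hcdef
  have hc : 0 < c := Real.sqrt_pos.mpr hs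
  have hI0 := I_pos (n-1) s (by linarith)
  have hI2 := I_pos (n+1) s (by linarith)
  have hcc : c^((n+3):ℝ) * c^((n-1):ℝ) = (c^((n+1):ℝ))^2 := by
    rw [sq, ← Real.rpow_add hc, ← Real.rpow_add hc]; ring_nf
  have hc2 : (c^2 : ℝ) ≠ 0 := by positivity
  have hd2 : ((c^((n+1):ℝ))^2 : ℝ) ≠ 0 := by
    have := Real.rpow_pos_of_pos hc (n+1); positivity
  calc c^((n+3):ℝ)*(c*I (n+3) s) * (c^((n-1):ℝ)*(c*I (n-1) s)) / (c^((n+1):ℝ)*(c*I (n+1) s))^2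
      = (c^((n+3):ℝ)*c^((n-1):ℝ)) * (c^2*(I (n+3) s * I (n-1) s))
        / ((c^((n+1):ℝ))^2 * (c^2 * (I (n+1) s)^2)) := by ring
    _ = ((c^((n+1):ℝ))^2) * (c^2*(I (n+3) s * I (n-1) s))
        / ((c^((n+1):ℝ))^2 * (c^2 * (I (n+1) s)^2)) := by rw [hcc]
    _ = (c^2*(I (n+3) s * I (n-1) s)) / (c^2 * (I (n+1) s)^2) := by
        rw [mul_div_mul_left _ _ hd2]
    _ = (I (n+3) s * I (n-1) s) / (I (n+1) s)^2 := by rw [mul_div_mul_left _ _ hc2]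
    _ = Sig n 4 s / (Sig n 2 s)^2 := by
        rw [Sig, Sig, show (4:ℝ)+n-1 = n+3 by ring, show (2:ℝ)+n-1 = n+1 by ring]
        field_simp

noncomputable def C (α t : ℝ) : ℝ :=
  ∫ u in Set.Ioi (-t/2 : ℝ), (t+2*u) ^ α * Real.exp (-u^2)

section subst
variable (t : ℝ) (ht : 0 < t)

lemma sqrt_deriv : ∀ u ∈ Set.Ioi (-t/2 : ℝ),
    HasDerivWithinAt (fun u => Real.sqrt (t+2*u)) (1/(2*Real.sqrt (t+2*u))*2) (Set.Ioi (-t/2)) u := by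
  intro u hu
  have hw : (0:ℝ) < t + 2*u := by simp only [Set.mem_Ioi] at hu; linarith
  have hinner : HasDerivAt (fun u : ℝ => t + 2*u) 2 u := by
    simpa using ((hasDerivAt_id u).const_mul (2:ℝ)).const_add t
  exact ((Real.hasDerivAt_sqrt (ne_of_gt hw)).comp u hinner).hasDerivWithinAt

lemma sqrt_image : (fun u => Real.sqrt (t+2*u)) '' Set.Ioi (-t/2 : ℝ) = Set.Ioi 0 := by
  ext y
  constructor
  · rintro ⟨u, hu, rfl⟩
    simp only [Set.mem_Ioi] at hu ⊢
    exact Real.sqrt_pos.mpr (by linarith)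
  · intro hy
    simp only [Set.mem_Ioi] at hy
    refine ⟨(y^2 - t)/2, by simp only [Set.mem_Ioi]; nlinarith, ?_⟩
    show Real.sqrt (t + 2*((y^2-t)/2)) = y
    rw [show t + 2*((y^2-t)/2) = y^2 by ring]
    exact Real.sqrt_sq hy.le

lemma sqrt_injOn : Set.InjOn (fun u => Real.sqrt (t+2*u)) (Set.Ioi (-t/2 : ℝ)) := by
  intro u hu v hv h
  simp only [Set.mem_Ioi] at hu hv
  have h1 : t + 2*u = t + 2*v := by
    have := congrArg (fun x : ℝ => x^2) h
    simpa [Real.sq_sqrt (show (0:ℝ) ≤ t+2*u by linarith),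
      Real.sq_sqrt (show (0:ℝ) ≤ t+2*v by linarith)] using this
  linarith

lemma subst_pointwise (m : ℝ) : ∀ u ∈ Set.Ioi (-t/2 : ℝ),
    |1/(2*Real.sqrt (t+2*u))*2| • ((Real.sqrt (t+2*u)) ^ m *
      Real.exp (-(Real.sqrt (t+2*u)) ^ 4 / 4 - (-t) * (Real.sqrt (t+2*u)) ^ 2 / 2))
    = Real.exp (t^2/4) * ((t+2*u) ^ ((m-1)/2) * Real.exp (-u^2)) := by
  intro u hu
  have hw : (0:ℝ) < t + 2*u := by simp only [Set.mem_Ioi] at hu; linarith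
  set w := t + 2*u with hwdef
  have hsq : Real.sqrt w ^ (2:ℕ) = w := Real.sq_sqrt hw.le
  have h4 : Real.sqrt w ^ (4:ℕ) = w^2 := by
    rw [show (4:ℕ) = 2*2 by norm_num, pow_mul, hsq]
  have hs0 : (0:ℝ) < Real.sqrt w := Real.sqrt_pos.mpr hw
  have habs : |1/(2*Real.sqrt w)*2| = (Real.sqrt w)⁻¹ := by
    rw [abs_of_nonneg (by positivity)]
    field_simp
  have hm : (Real.sqrt w) ^ m = w ^ (m/2) := by
    rw [Real.sqrt_eq_rpow, ← Real.rpow_mul hw.le]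
    ring_nf
  have hinv : (Real.sqrt w)⁻¹ = w ^ (-(1/2) : ℝ) := by
    rw [Real.sqrt_eq_rpow, ← Real.rpow_neg_one, ← Real.rpow_mul hw.le]
    norm_num
  rw [smul_eq_mul, habs, hm, hinv, h4, hsq]
  rw [show -w^2/4 - (-t)*w/2 = t^2/4 - u^2 by rw [hwdef]; ring]
  have hpow : w ^ (-(1/2):ℝ) * w ^ (m/2) = w ^ ((m-1)/2) := by
    rw [← Real.rpow_add hw]; ring_nf
  calc w ^ (-(1/2):ℝ) * (w ^ (m/2) * Real.exp (t^2/4 - u^2))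
      = (w ^ (-(1/2):ℝ) * w ^ (m/2)) * Real.exp (t^2/4 - u^2) := by ring
    _ = w ^ ((m-1)/2) * (Real.exp (t^2/4) * Real.exp (-u^2)) := by
        rw [hpow, ← Real.exp_add, show t^2/4 + -u^2 = t^2/4 - u^2 by ring]
    _ = Real.exp (t^2/4) * (w ^ ((m-1)/2) * Real.exp (-u^2)) := by ring
end subst

lemma I_subst (m t : ℝ) (ht : 0 < t) :
    I m (-t) = Real.exp (t^2/4) * C ((m-1)/2) t := by
  have key := integral_image_eq_integral_abs_deriv_smul measurableSet_Ioi
    (sqrt_deriv t) (sqrt_injOn t)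
    (fun x => x ^ m * Real.exp (-x ^ 4 / 4 - (-t) * x ^ 2 / 2))
  rw [sqrt_image t] at key
  rw [I, key, setIntegral_congr_fun measurableSet_Ioi (subst_pointwise t m),
    integral_const_mul, C]

lemma C_integrable (α t : ℝ) (hα : -1 < α) (ht : 0 < t) :
    IntegrableOn (fun u => (t+2*u) ^ α * Real.exp (-u^2)) (Set.Ioi (-t/2 : ℝ)) := by
  have hm : -1 < 2*α + 1 := by linarith
  have h1 : IntegrableOn (fun x : ℝ => x ^ (2*α+1) * Real.exp (-x ^ 4 / 4 - (-t) * x ^ 2 / 2))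
      (Set.Ioi 0) := integ_aux (2*α+1) (-t) hm
  rw [← sqrt_image t] at h1
  rw [integrableOn_image_iff_integrableOn_abs_deriv_smul measurableSet_Ioi
    (sqrt_deriv t) (sqrt_injOn t)] at h1
  have h2 := h1.congr_fun (subst_pointwise t (2*α+1)) measurableSet_Ioi
  rw [show (2*α+1-1)/2 = α by ring] at h2
  have h3 := h2.const_mul (Real.exp (t^2/4))⁻¹
  have h4 : (fun u => (Real.exp (t^2/4))⁻¹ * (Real.exp (t^2/4) * ((t+2*u) ^ α * Real.exp (-u^2))))
      = fun u => (t+2*u) ^ α * Real.exp (-u^2) := by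
    funext u
    rw [← mul_assoc, inv_mul_cancel₀ (Real.exp_ne_zero _), one_mul]
  rwa [h4] at h3

lemma C_div_eq (α t : ℝ) (ht : 0 < t) :
    C α t / t ^ α = ∫ u in Set.Ioi (-t/2:ℝ), ((t+2*u)/t) ^ α * Real.exp (-u^2) := by
  rw [C, ← integral_div]
  refine setIntegral_congr_fun measurableSet_Ioi fun u hu => ?_
  have hw : (0:ℝ) < t+2*u := by simp only [Set.mem_Ioi] at hu; linarith
  rw [Real.div_rpow hw.le ht.le]
  ring

lemma W_integrable (α t : ℝ) (hα : -1 < α) (ht : 0 < t) :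
    IntegrableOn (fun u => ((t+2*u)/t) ^ α * Real.exp (-u^2)) (Set.Ioi (-t/2:ℝ)) := by
  refine IntegrableOn.congr_fun ((C_integrable α t hα ht).div_const (t ^ α)) (fun u hu => ?_) measurableSet_Ioi
  have hw : (0:ℝ) < t+2*u := by simp only [Set.mem_Ioi] at hu; linarith
  rw [Real.div_rpow hw.le ht.le]
  ring

lemma C_split (α t : ℝ) (hα : -1 < α) (ht : 1 ≤ t) :
    C α t / t ^ α =
      (∫ u in Set.Ioc (-t/2:ℝ) (-t/4), ((t+2*u)/t) ^ α * Real.exp (-u^2))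
      + ∫ u in Set.Ioi (-t/4:ℝ), ((t+2*u)/t) ^ α * Real.exp (-u^2) := by
  have ht0 : (0:ℝ) < t := lt_of_lt_of_le one_pos ht
  rw [C_div_eq α t ht0, ← Set.Ioc_union_Ioi_eq_Ioi (show (-t/2:ℝ) ≤ -t/4 by linarith)]
  exact setIntegral_union (Set.Ioc_disjoint_Ioi le_rfl) measurableSet_Ioi
    ((W_integrable α t hα ht0).mono_set Set.Ioc_subset_Ioi_self)
    ((W_integrable α t hα ht0).mono_set (Set.Ioi_subset_Ioi (by linarith)))

lemma E_le (α t : ℝ) (hα : -1 < α) (ht : 1 ≤ t) :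
    (∫ u in Set.Ioc (-t/2:ℝ) (-t/4), ((t+2*u)/t) ^ α * Real.exp (-u^2))
      ≤ Real.exp (-t^2/16) * ((t/2) * ((1/2:ℝ)^(α+1)/(α+1))) := by
  have ht0 : (0:ℝ) < t := lt_of_lt_of_le one_pos ht
  have hVint : IntervalIntegrable (fun u : ℝ => ((2/t)*u + 1) ^ α) volume (-t/2) (-t/4) := by
    have J := intervalIntegral.intervalIntegrable_rpow' (a := (0:ℝ)) (b := (1/2:ℝ)) hα
    have J2 := (J.comp_add_right 1).comp_mul_left (c := 2/t)
    have e1 : ((0:ℝ)-1)/(2/t) = -t/2 := by field_simp; ring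
    have e2 : ((1/2:ℝ)-1)/(2/t) = -t/4 := by rw [div_div_eq_mul_div]; ring
    rwa [e1, e2] at J2
  have hVOn : IntegrableOn (fun u : ℝ => ((t+2*u)/t) ^ α) (Set.Ioc (-t/2:ℝ) (-t/4)) := by
    rw [intervalIntegrable_iff_integrableOn_Ioc_of_le (by linarith)] at hVint
    refine hVint.congr_fun (fun u hu => ?_) measurableSet_Ioc
    dsimp only
    rw [show (2/t)*u + 1 = (t+2*u)/t by field_simp; ring]
  have hgOn : IntegrableOn (fun u : ℝ => Real.exp (-t^2/16) * ((t+2*u)/t) ^ α)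
      (Set.Ioc (-t/2:ℝ) (-t/4)) := hVOn.const_mul _
  have hfOn : IntegrableOn (fun u : ℝ => ((t+2*u)/t) ^ α * Real.exp (-u^2))
      (Set.Ioc (-t/2:ℝ) (-t/4)) :=
    (W_integrable α t hα ht0).mono_set Set.Ioc_subset_Ioi_self
  have step1 : (∫ u in Set.Ioc (-t/2:ℝ) (-t/4), ((t+2*u)/t) ^ α * Real.exp (-u^2))
      ≤ ∫ u in Set.Ioc (-t/2:ℝ) (-t/4), Real.exp (-t^2/16) * ((t+2*u)/t) ^ α := by
    refine setIntegral_mono_on hfOn hgOn measurableSet_Ioc fun u hu => ?_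
    have hu2 : u ≤ -t/4 := hu.2
    have hb0 : (0:ℝ) ≤ (t+2*u)/t := by
      have : (0:ℝ) < t+2*u := by have := hu.1; simp only [Set.mem_Ioc] at *; linarith
      positivity
    have hee : Real.exp (-u^2) ≤ Real.exp (-t^2/16) := by
      apply Real.exp_le_exp.mpr
      nlinarith
    calc ((t+2*u)/t) ^ α * Real.exp (-u^2) ≤ ((t+2*u)/t) ^ α * Real.exp (-t^2/16) :=
          mul_le_mul_of_nonneg_left hee (Real.rpow_nonneg hb0 α)
      _ = Real.exp (-t^2/16) * ((t+2*u)/t) ^ α := by ring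
  have step2 : (∫ u in Set.Ioc (-t/2:ℝ) (-t/4), Real.exp (-t^2/16) * ((t+2*u)/t) ^ α)
      = Real.exp (-t^2/16) * ((t/2) * ((1/2:ℝ)^(α+1)/(α+1))) := by
    rw [integral_const_mul]
    congr 1
    rw [← intervalIntegral.integral_of_le (show (-t/2:ℝ) ≤ -t/4 by linarith)]
    have hcongr : (∫ u in (-t/2:ℝ)..(-t/4), ((t+2*u)/t) ^ α)
        = ∫ u in (-t/2:ℝ)..(-t/4), ((2/t)*u + 1) ^ α := by
      apply intervalIntegral.integral_congr
      intro u _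
      have he : (2/t)*u + 1 = (t+2*u)/t := by field_simp; ring
      simp only [he]
    rw [hcongr, intervalIntegral.integral_comp_mul_add (fun x : ℝ => x ^ α)
      ((div_pos two_pos ht0).ne') 1]
    have e1 : (2/t)*(-t/2) + 1 = 0 := by field_simp; ring
    have e2 : (2/t)*(-t/4) + 1 = 1/2 := by field_simp; ring
    rw [e1, e2, integral_rpow (Or.inl hα)]
    rw [Real.zero_rpow (show α+1 ≠ 0 from (by linarith : (0:ℝ) < α+1).ne')]
    rw [smul_eq_mul, inv_div]
    ring
  calc _ ≤ _ := step1
    _ = _ := step2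

lemma U_tendsto (α : ℝ) :
    Tendsto (fun t : ℝ => Real.exp (-t^2/16) * ((t/2) * ((1/2:ℝ)^(α+1)/(α+1))))
      atTop (𝓝 0) := by
  have base : Tendsto (fun t : ℝ => t * Real.exp (-t^2/16)) atTop (𝓝 0) := by
    have h := tendsto_rpow_mul_exp_neg_mul_atTop_nhds_zero (1/2) (1/16) (by norm_num)
    have h2 : Tendsto (fun t : ℝ => t^2) atTop atTop := tendsto_pow_atTop two_ne_zero
    have h3 := h.comp h2
    apply h3.congr'
    filter_upwards [eventually_ge_atTop (0:ℝ)] with t ht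
    show ((t^2) ^ ((1/2):ℝ)) * Real.exp (-(1/16)*t^2) = t * Real.exp (-t^2/16)
    rw [← Real.sqrt_eq_rpow, Real.sqrt_sq ht]
    ring_nf
  have h4 := base.const_mul ((1/2:ℝ)^(α+1)/(α+1)/2)
  rw [mul_zero] at h4
  apply h4.congr
  intro t
  ring

lemma E_tendsto (α : ℝ) (hα : -1 < α) :
    Tendsto (fun t : ℝ => ∫ u in Set.Ioc (-t/2:ℝ) (-t/4), ((t+2*u)/t) ^ α * Real.exp (-u^2))
      atTop (𝓝 0) := by
  refine tendsto_of_tendsto_of_tendsto_of_le_of_le' tendsto_const_nhds (U_tendsto α) ?_ ?_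
  · filter_upwards [eventually_ge_atTop (1:ℝ)] with t ht
    refine setIntegral_nonneg measurableSet_Ioc fun u hu => ?_
    have hw : (0:ℝ) < t+2*u := by
      have := hu.1; linarith
    have ht0 : (0:ℝ) < t := by linarith
    exact mul_nonneg (Real.rpow_nonneg (by positivity) α) (Real.exp_pos _).le
  · filter_upwards [eventually_ge_atTop (1:ℝ)] with t ht
    exact E_le α t hα ht

lemma M_tendsto (α : ℝ) (hα : -1 < α) :
    Tendsto (fun t : ℝ => ∫ u in Set.Ioi (-t/4:ℝ), ((t+2*u)/t) ^ α * Real.exp (-u^2))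
      atTop (𝓝 (∫ u : ℝ, Real.exp (-u^2))) := by
  have main : Tendsto (fun t : ℝ => ∫ u : ℝ,
      Set.indicator (Set.Ioi (-t/4:ℝ)) (fun u => ((t+2*u)/t) ^ α * Real.exp (-u^2)) u)
      atTop (𝓝 (∫ u : ℝ, Real.exp (-u^2))) := by
    apply tendsto_integral_filter_of_dominated_convergence
      (fun u => (2:ℝ)^|α| * (Real.exp (2*α^2) * Real.exp (-(1/2)*u^2)))
    · filter_upwards with t
      apply Measurable.aestronglyMeasurable
      apply Measurable.indicator _ measurableSet_Ioi
      fun_prop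
    · filter_upwards [eventually_ge_atTop (1:ℝ)] with t ht
      apply Filter.Eventually.of_forall
      intro u
      have ht0 : (0:ℝ) < t := by linarith
      by_cases hu : u ∈ Set.Ioi (-t/4:ℝ)
      · rw [Set.indicator_of_mem hu]
        have hu4 : -t/4 < u := hu
        have hb0 : (0:ℝ) < (t+2*u)/t := div_pos (by linarith) ht0
        have hbl : (1/2:ℝ) ≤ (t+2*u)/t := by
          rw [le_div_iff₀ ht0]; linarith
        have hone2 : (1:ℝ) ≤ (2:ℝ)^|α| := Real.one_le_rpow one_le_two (abs_nonneg α)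
        have hkey : ((t+2*u)/t) ^ α ≤ (2:ℝ)^|α| * Real.exp (2 * |α| * |u|) := by
          have hexp1 : (1:ℝ) ≤ Real.exp (2 * |α| * |u|) := Real.one_le_exp (by positivity)
          rcases le_or_gt 0 α with h|h
          · rcases le_or_gt ((t+2*u)/t) 1 with hb|hb
            · calc ((t+2*u)/t) ^ α ≤ 1 := Real.rpow_le_one hb0.le hb h
                _ ≤ (2:ℝ)^|α| * Real.exp (2 * |α| * |u|) := by nlinarith
            · have hu0 : (0:ℝ) ≤ u := by
                have h5 := (one_lt_div ht0).mp hb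
                linarith
              calc ((t+2*u)/t) ^ α ≤ (Real.exp (2*u)) ^ α := by
                    apply Real.rpow_le_rpow hb0.le ?_ h
                    have h1 : (t+2*u)/t ≤ 1 + 2*u := by
                      rw [div_le_iff₀ ht0]; nlinarith
                    have h2 := Real.add_one_le_exp (2*u)
                    linarith
                _ = Real.exp (2*u*α) := by rw [← Real.exp_mul]
                _ ≤ Real.exp (2 * |α| * |u|) := Real.exp_le_exp.mpr
                    (le_of_eq (by rw [abs_of_nonneg h, abs_of_nonneg hu0]; ring))
                _ ≤ (2:ℝ)^|α| * Real.exp (2 * |α| * |u|) := by nlinarith [Real.exp_pos (2 * |α| * |u|)]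
          · calc ((t+2*u)/t) ^ α ≤ (1/2:ℝ) ^ α :=
                  Real.rpow_le_rpow_of_nonpos one_half_pos hbl h.le
              _ = (2:ℝ)^|α| := by
                  rw [abs_of_neg h, one_div, Real.inv_rpow two_pos.le,
                    ← Real.rpow_neg two_pos.le]
              _ ≤ (2:ℝ)^|α| * Real.exp (2 * |α| * |u|) := by
                  nlinarith [Real.rpow_pos_of_pos two_pos |α|]
        have hval0 : (0:ℝ) ≤ ((t+2*u)/t) ^ α * Real.exp (-u^2) :=
          mul_nonneg (Real.rpow_nonneg hb0.le α) (Real.exp_pos _).le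
        rw [Real.norm_eq_abs, abs_of_nonneg hval0]
        calc ((t+2*u)/t) ^ α * Real.exp (-u^2)
            ≤ ((2:ℝ)^|α| * Real.exp (2 * |α| * |u|)) * Real.exp (-u^2) :=
              mul_le_mul_of_nonneg_right hkey (Real.exp_pos _).le
          _ = (2:ℝ)^|α| * Real.exp (2 * |α| * |u| + -u^2) := by rw [Real.exp_add]; ring
          _ ≤ (2:ℝ)^|α| * Real.exp (2*α^2 + -(1/2)*u^2) := by
              have h6 : 2 * |α| * |u| + -u^2 ≤ 2*α^2 + -(1/2)*u^2 := by
                nlinarith [sq_nonneg (|u| - 2 * |α|), sq_abs u, sq_abs α]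
              have h7 := Real.exp_le_exp.mpr h6
              nlinarith [Real.rpow_pos_of_pos two_pos |α|, Real.exp_pos (2 * |α| * |u| + -u^2)]
          _ = (2:ℝ)^|α| * (Real.exp (2*α^2) * Real.exp (-(1/2)*u^2)) := by
              rw [← Real.exp_add]
      · rw [Set.indicator_of_notMem hu]
        simp only [norm_zero]
        positivity
    · exact ((integrable_exp_neg_mul_sq one_half_pos).const_mul _).const_mul _
    · apply Filter.Eventually.of_forall
      intro u
      have hlim1 : Tendsto (fun t : ℝ => (t+2*u)/t) atTop (𝓝 1) := by
        have h1 : Tendsto (fun t : ℝ => 2*u/t) atTop (𝓝 0) := by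
          have := tendsto_inv_atTop_zero.const_mul (2*u)
          rw [mul_zero] at this
          exact this.congr fun t => by rw [div_eq_mul_inv]
        have h2 := tendsto_const_nhds.add h1 (f := fun _ : ℝ => (1:ℝ))
        rw [add_zero] at h2
        apply h2.congr'
        filter_upwards [eventually_gt_atTop (0:ℝ)] with t ht
        field_simp
      have hlim2 : Tendsto (fun t : ℝ => ((t+2*u)/t) ^ α) atTop (𝓝 1) := by
        have hc := (Real.continuousAt_rpow_const 1 α (Or.inl one_ne_zero)).tendsto.comp hlim1
        rwa [Real.one_rpow] at hc
      have hlim3 : Tendsto (fun t : ℝ => ((t+2*u)/t) ^ α * Real.exp (-u^2)) atTop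
          (𝓝 (Real.exp (-u^2))) := by
        have := hlim2.mul_const (Real.exp (-u^2))
        rwa [one_mul] at this
      apply hlim3.congr'
      filter_upwards [eventually_gt_atTop (-4*u)] with t ht
      rw [Set.indicator_of_mem]
      simp only [Set.mem_Ioi]
      linarith
  apply main.congr
  intro t
  exact integral_indicator measurableSet_Ioi

lemma C_tendsto (α : ℝ) (hα : -1 < α) :
    Tendsto (fun t : ℝ => C α t / t ^ α) atTop (𝓝 (∫ u : ℝ, Real.exp (-u^2))) := by
  have hsum := (E_tendsto α hα).add (M_tendsto α hα)
  rw [zero_add] at hsum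
  apply hsum.congr'
  filter_upwards [eventually_ge_atTop (1:ℝ)] with t ht
  exact (C_split α t hα ht).symm

lemma L_pos : 0 < ∫ u : ℝ, Real.exp (-u^2) := by
  have h : (∫ u : ℝ, Real.exp (-u^2)) = Real.sqrt (π/1) := by
    rw [← integral_gaussian 1]
    congr 1
    funext x
    norm_num
  rw [h]
  positivity

lemma atBot_limit (n : ℝ) (hn : 0 < n) :
    Tendsto (fun s : ℝ => Sig n 4 s / (Sig n 2 s)^2) atBot (𝓝 1) := by
  have hL := L_pos
  have T1 := C_tendsto ((n+2)/2) (by linarith)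
  have T0 := C_tendsto ((n-2)/2) (by linarith)
  have T2 := C_tendsto (n/2) (by linarith)
  have hL2 : ((∫ u : ℝ, Real.exp (-u^2))^2 : ℝ) ≠ 0 := by positivity
  have Tall := (T1.mul T0).div (T2.pow 2) (by simpa using hL2)
  have hlim : (∫ u : ℝ, Real.exp (-u^2)) * (∫ u : ℝ, Real.exp (-u^2))
      / ((∫ u : ℝ, Real.exp (-u^2))^2) = 1 := by
    field_simp
  rw [hlim] at Tall
  have comp := Tall.comp tendsto_neg_atBot_atTop
  apply comp.congr'
  filter_upwards [eventually_lt_atBot (0:ℝ)] with s hs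
  have ht : (0:ℝ) < -s := by linarith
  simp only [Function.comp_apply, Pi.div_apply]
  set t := -s with htdef
  have hseq : s = -t := by rw [htdef]; ring
  have hI4 : I (n+3) s = Real.exp (t^2/4) * C ((n+2)/2) t := by
    rw [hseq, I_subst (n+3) t ht, show (n+3-1)/2 = (n+2)/2 by ring]
  have hI2 : I (n+1) s = Real.exp (t^2/4) * C (n/2) t := by
    rw [hseq, I_subst (n+1) t ht, show (n+1-1)/2 = n/2 by ring]
  have hI0 : I (n-1) s = Real.exp (t^2/4) * C ((n-2)/2) t := by
    rw [hseq, I_subst (n-1) t ht, show (n-1-1)/2 = (n-2)/2 by ring]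
  have hC2 : 0 < C (n/2) t := by
    have h1 := I_pos (n+1) s (by linarith)
    rw [hI2] at h1
    nlinarith [Real.exp_pos (t^2/4)]
  have hpow : t^((n+2)/2:ℝ) * t^((n-2)/2:ℝ) = (t^((n/2):ℝ))^2 := by
    rw [sq, ← Real.rpow_add ht, ← Real.rpow_add ht]
    ring_nf
  have ht2 : (0:ℝ) < t^((n/2):ℝ) := Real.rpow_pos_of_pos ht _
  have he : (0:ℝ) < Real.exp (t^2/4) := Real.exp_pos _
  have hI0pos := I_pos (n-1) s (by linarith)
  have hI2pos := I_pos (n+1) s (by linarith)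
  calc C ((n+2)/2) t / t^((n+2)/2:ℝ) * (C ((n-2)/2) t / t^((n-2)/2:ℝ))
        / (C (n/2) t / t^((n/2):ℝ))^2
      = (C ((n+2)/2) t * C ((n-2)/2) t) / (t^((n+2)/2:ℝ) * t^((n-2)/2:ℝ))
        / ((C (n/2) t)^2 / (t^((n/2):ℝ))^2) := by ring
    _ = (C ((n+2)/2) t * C ((n-2)/2) t) / ((t^((n/2):ℝ))^2)
        / ((C (n/2) t)^2 / (t^((n/2):ℝ))^2) := by rw [hpow]
    _ = (C ((n+2)/2) t * C ((n-2)/2) t) / (C (n/2) t)^2 := by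
        rw [div_div_div_cancel_right₀]
        exact pow_ne_zero 2 ht2.ne'
    _ = I (n+3) s * I (n-1) s / (I (n+1) s)^2 := by
        rw [hI4, hI2, hI0]
        rw [show Real.exp (t^2/4) * C ((n+2)/2) t * (Real.exp (t^2/4) * C ((n-2)/2) t)
            = (Real.exp (t^2/4))^2 * (C ((n+2)/2) t * C ((n-2)/2) t) by ring,
          show (Real.exp (t^2/4) * C (n/2) t)^2 = (Real.exp (t^2/4))^2 * (C (n/2) t)^2 by ring,
          mul_div_mul_left _ _ (by positivity : ((Real.exp (t^2/4))^2 : ℝ) ≠ 0)]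
    _ = Sig n 4 s / (Sig n 2 s)^2 := by
        rw [Sig, Sig, show (4:ℝ)+n-1 = n+3 by ring, show (2:ℝ)+n-1 = n+1 by ring]
        field_simp

end aux

/-- The universal kurtosis `R_n^{(4)}(s) = Σ_{n,4}(s)/Σ_{n,2}(s)²` tends to `(n+2)/n`
as `s → +∞` and tends to `1` as `s → -∞`. -/
theorem kurtosis_limits (n : ℝ) (hn : 0 < n) :
    Filter.Tendsto (fun s : ℝ => Sig n 4 s / (Sig n 2 s) ^ 2) Filter.atTop
      (nhds ((n + 2) / n)) ∧
    Filter.Tendsto (fun s : ℝ => Sig n 4 s / (Sig n 2 s) ^ 2) Filter.atBot (nhds 1) := by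
  exact ⟨atTop_limit n hn, atBot_limit n hn⟩
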